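/- arXiv:0903.2214 — 5 statements merged into one kernel-verified Lean document; each statement's English description precedes it below -/
import Mathlib

section
/- Let Ω ⊆ ℝ² be a nonempty open set and let u : ℝ² → ℝ be locally integrable on Ω with weak gradient g = (g₁,g₂) on Ω (i.e. u ∈ W^{1,1}_loc(Ω)). Then the set {x = (x₁,x₂) ∈ Ω : g₁(x) = −x₂ and g₂(x) = x₁} is not of full Lebesgue measure in Ω; that is, the set {x ∈ Ω : g(x) ≠ (−x₂, x₁)} has positive two-dimensional Lebesgue measure. (This is the graph case f(x₁,x₂) = (x₁, x₂, u(x₁,x₂)) of the lemma stating that the Heisenberg contact system ∂ᵢf³ = f¹∂ᵢf² − f²∂ᵢf¹, i = 1,2, must fail on a set of positive measure for every Sobolev graph parametrization.) -/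
open MeasureTheory
open scoped ENNReal

/-- `u ∈ W^{1,1}_loc(Ω)` with weak gradient `(g₁, g₂)`: `u`, `g₁`, `g₂` are locally
integrable on the open set `Ω ⊆ ℝ²` and the integration-by-parts identities
`∫_Ω u ∂ᵢφ = −∫_Ω gᵢ φ` hold for every smooth `φ` with compact support in `Ω`. -/
def HasWeakGradientOn (u g₁ g₂ : ℝ × ℝ → ℝ) (Ω : Set (ℝ × ℝ)) : Prop :=
  LocallyIntegrableOn u Ω volume ∧
  LocallyIntegrableOn g₁ Ω volume ∧
  LocallyIntegrableOn g₂ Ω volume ∧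
  (∀ φ : ℝ × ℝ → ℝ, ContDiff ℝ (⊤ : ℕ∞) φ → HasCompactSupport φ → tsupport φ ⊆ Ω →
    ∫ x in Ω, u x * fderiv ℝ φ x (1, 0) = -∫ x in Ω, g₁ x * φ x) ∧
  (∀ φ : ℝ × ℝ → ℝ, ContDiff ℝ (⊤ : ℕ∞) φ → HasCompactSupport φ → tsupport φ ⊆ Ω →
    ∫ x in Ω, u x * fderiv ℝ φ x (0, 1) = -∫ x in Ω, g₂ x * φ x)

lemma aux_eval_deriv_props (ψ : ℝ × ℝ → ℝ) (hψ : ContDiff ℝ (⊤ : ℕ∞) ψ)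
    (hc : HasCompactSupport ψ) (v : ℝ × ℝ) :
    ContDiff ℝ (⊤ : ℕ∞) (fun x => fderiv ℝ ψ x v) ∧
    HasCompactSupport (fun x => fderiv ℝ ψ x v) ∧
    tsupport (fun x => fderiv ℝ ψ x v) ⊆ tsupport ψ := by
  have hd : ContDiff ℝ (⊤ : ℕ∞) (fderiv ℝ ψ) := hψ.fderiv_right (by simp)
  refine ⟨hd.clm_apply contDiff_const, ?_, ?_⟩
  · have h1 : HasCompactSupport (fderiv ℝ ψ) := hc.fderiv ℝ
    exact h1.comp_left (g := fun L : (ℝ × ℝ) →L[ℝ] ℝ => L v) rfl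
  · intro x hx
    have h1 : tsupport (fun x => fderiv ℝ ψ x v) ⊆ tsupport (fderiv ℝ ψ) := by
      apply closure_mono
      intro y hy
      simp only [Function.mem_support] at hy ⊢
      intro h; rw [h] at hy; simp at hy
    have h2 : tsupport (fderiv ℝ ψ) ⊆ tsupport ψ :=
      closure_minimal (support_fderiv_subset ℝ) isClosed_closure
    exact h2 (h1 hx)

/-- For a Sobolev graph parametrization `f(x₁,x₂) = (x₁, x₂, u(x₁,x₂))` of a surface in the
Heisenberg group `ℍ¹`, the contact system (here `∇u(x) = (−x₂, x₁)`) must fail on a set of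
positive Lebesgue measure. -/
theorem contact_fails_on_positive_measure_graph3
    (Ω : Set (ℝ × ℝ)) (hΩ : IsOpen Ω) (hne : Ω.Nonempty)
    (u g₁ g₂ : ℝ × ℝ → ℝ) (hu : HasWeakGradientOn u g₁ g₂ Ω) :
    0 < volume {x ∈ Ω | (g₁ x, g₂ x) ≠ (-x.2, x.1)} := by
  obtain ⟨-, -, -, H1, H2⟩ := hu
  by_contra hcon
  push_neg at hcon
  have hS : volume {x ∈ Ω | (g₁ x, g₂ x) ≠ (-x.2, x.1)} = 0 :=
    le_antisymm hcon zero_le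
  have haeS : ∀ᵐ x ∂(volume : Measure (ℝ × ℝ)),
      x ∉ {x ∈ Ω | (g₁ x, g₂ x) ≠ (-x.2, x.1)} := by
    rw [ae_iff]; simpa using hS
  have hae : ∀ᵐ x ∂(volume.restrict Ω), g₁ x = -x.2 ∧ g₂ x = x.1 := by
    filter_upwards [ae_restrict_of_ae haeS, ae_restrict_mem hΩ.measurableSet] with x hx hxΩ
    by_contra h
    refine hx ⟨hxΩ, fun he => h ?_⟩
    exact ⟨congrArg Prod.fst he, congrArg Prod.snd he⟩
  -- bump function
  obtain ⟨x₀, hx₀⟩ := hne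
  obtain ⟨ε, hε, hball⟩ := Metric.isOpen_iff.1 hΩ x₀ hx₀
  set ψf : ContDiffBump x₀ := ⟨ε / 2, 3 * ε / 4, by positivity, by linarith⟩ with hψf
  set ψ : ℝ × ℝ → ℝ := fun x => ψf x with hψdef
  have hψ : ContDiff ℝ (⊤ : ℕ∞) ψ := ψf.contDiff
  have hψc : HasCompactSupport ψ := ψf.hasCompactSupport
  have hψΩ : tsupport ψ ⊆ Ω := by
    rw [ψf.tsupport_eq]
    exact (Metric.closedBall_subset_ball (by simp [hψf]; linarith)).trans hball
  have hI : 0 < ∫ x, ψ x := ψf.integral_pos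
  -- test functions
  obtain ⟨hφ1s, hφ1c, hφ1t⟩ := aux_eval_deriv_props ψ hψ hψc (0, 1)
  obtain ⟨hφ2s, hφ2c, hφ2t⟩ := aux_eval_deriv_props ψ hψ hψc (1, 0)
  have E1 := H1 _ hφ1s hφ1c (hφ1t.trans hψΩ)
  have E2 := H2 _ hφ2s hφ2c (hφ2t.trans hψΩ)
  -- symmetry of second derivatives
  have hdiffψ : Differentiable ℝ ψ := hψ.differentiable (by simp)
  have hd : ContDiff ℝ (⊤ : ℕ∞) (fderiv ℝ ψ) := hψ.fderiv_right (by simp)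
  have hddiff : Differentiable ℝ (fderiv ℝ ψ) := hd.differentiable (by simp)
  have hmix : ∀ x : ℝ × ℝ,
      fderiv ℝ (fun y => fderiv ℝ ψ y (0, 1)) x (1, 0) =
      fderiv ℝ (fun y => fderiv ℝ ψ y (1, 0)) x (0, 1) := by
    intro x
    rw [fderiv_clm_apply (hddiff x) (differentiableAt_const _),
        fderiv_clm_apply (hddiff x) (differentiableAt_const _)]
    simp only [fderiv_fun_const, Pi.zero_apply, ContinuousLinearMap.comp_zero, add_zero,
      ContinuousLinearMap.add_apply, ContinuousLinearMap.flip_apply,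
      ContinuousLinearMap.zero_apply, zero_add]
    exact second_derivative_symmetric (fun y => (hdiffψ y).hasFDerivAt)
      (hddiff x).hasFDerivAt _ _
  have hE : ∫ x in Ω, g₁ x * fderiv ℝ ψ x (0, 1) = ∫ x in Ω, g₂ x * fderiv ℝ ψ x (1, 0) := by
    have : ∫ x in Ω, u x * fderiv ℝ (fun y => fderiv ℝ ψ y (0, 1)) x (1, 0) =
        ∫ x in Ω, u x * fderiv ℝ (fun y => fderiv ℝ ψ y (1, 0)) x (0, 1) := by
      apply setIntegral_congr_fun hΩ.measurableSet
      intro x _; dsimp only; rw [hmix x]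
    rw [E1, E2] at this
    exact neg_injective this
  -- replace g by the contact vector field a.e.
  have l1 : ∫ x in Ω, -x.2 * fderiv ℝ ψ x (0, 1) = ∫ x in Ω, g₁ x * fderiv ℝ ψ x (0, 1) := by
    apply integral_congr_ae
    filter_upwards [hae] with x hx
    rw [hx.1]
  have l2 : ∫ x in Ω, g₂ x * fderiv ℝ ψ x (1, 0) = ∫ x in Ω, x.1 * fderiv ℝ ψ x (1, 0) := by
    apply integral_congr_ae
    filter_upwards [hae] with x hx
    rw [hx.2]
  have hE2 : ∫ x in Ω, -x.2 * fderiv ℝ ψ x (0, 1) = ∫ x in Ω, x.1 * fderiv ℝ ψ x (1, 0) :=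
    l1.trans (hE.trans l2)
  -- extend to all of ℝ²
  have hext : ∀ (F : ℝ × ℝ → ℝ) (v : ℝ × ℝ),
      ∫ x in Ω, F x * fderiv ℝ ψ x v = ∫ x, F x * fderiv ℝ ψ x v := by
    intro F v
    apply setIntegral_eq_integral_of_forall_compl_eq_zero
    intro x hx
    have : x ∉ tsupport (fun y => fderiv ℝ ψ y v) :=
      fun h => hx ((aux_eval_deriv_props ψ hψ hψc v).2.2.trans hψΩ h)
    rw [image_eq_zero_of_notMem_tsupport this, mul_zero]
  rw [hext (fun x => -x.2) (0, 1), hext (fun x => x.1) (1, 0)] at hE2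
  -- integration by parts on ℝ²
  have hcont_d : ∀ v : ℝ × ℝ, Continuous (fun x => fderiv ℝ ψ x v) := by
    intro v; exact (hd.continuous).clm_apply continuous_const
  have hfst : ∀ x : ℝ × ℝ, fderiv ℝ (fun y : ℝ × ℝ => y.1) x = ContinuousLinearMap.fst ℝ ℝ ℝ :=
    fun x => hasFDerivAt_fst.fderiv
  have hsnd : ∀ x : ℝ × ℝ, fderiv ℝ (fun y : ℝ × ℝ => y.2) x = ContinuousLinearMap.snd ℝ ℝ ℝ :=
    fun x => hasFDerivAt_snd.fderiv
  have hψint : Integrable ψ := ψf.integrable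
  have hA : ∫ x : ℝ × ℝ, x.1 * fderiv ℝ ψ x (1, 0) = -∫ x, ψ x := by
    have h := integral_mul_fderiv_eq_neg_fderiv_mul_of_integrable
      (μ := (volume : Measure (ℝ × ℝ))) (f := fun y : ℝ × ℝ => y.1) (g := ψ) (v := ((1 : ℝ), (0 : ℝ)))
      (hψint.congr (Filter.Eventually.of_forall fun x => by simp only [hfst]; simp))
      ((continuous_fst.mul (hcont_d (1, 0))).integrable_of_hasCompactSupport
        ((aux_eval_deriv_props ψ hψ hψc (1, 0)).2.1.mul_left))
      ((continuous_fst.mul ψf.continuous).integrable_of_hasCompactSupport hψc.mul_left)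
      (fun x _ => differentiableAt_fst) (fun x _ => hψ.differentiable (by simp) x)
    rw [h]
    congr 1
    apply integral_congr_ae
    filter_upwards with x
    simp only [hfst]; simp
  have hB : ∫ x : ℝ × ℝ, x.2 * fderiv ℝ ψ x (0, 1) = -∫ x, ψ x := by
    have h := integral_mul_fderiv_eq_neg_fderiv_mul_of_integrable
      (μ := (volume : Measure (ℝ × ℝ))) (f := fun y : ℝ × ℝ => y.2) (g := ψ) (v := ((0 : ℝ), (1 : ℝ)))
      (hψint.congr (Filter.Eventually.of_forall fun x => by simp only [hsnd]; simp))
      ((continuous_snd.mul (hcont_d (0, 1))).integrable_of_hasCompactSupport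
        ((aux_eval_deriv_props ψ hψ hψc (0, 1)).2.1.mul_left))
      ((continuous_snd.mul ψf.continuous).integrable_of_hasCompactSupport hψc.mul_left)
      (fun x _ => differentiableAt_snd) (fun x _ => hψ.differentiable (by simp) x)
    rw [h]
    congr 1
    apply integral_congr_ae
    filter_upwards with x
    simp only [hsnd]; simp
  have hneg : ∫ x : ℝ × ℝ, -x.2 * fderiv ℝ ψ x (0, 1) = ∫ x, ψ x := by
    have : ∫ x : ℝ × ℝ, -x.2 * fderiv ℝ ψ x (0, 1) = -∫ x : ℝ × ℝ, x.2 * fderiv ℝ ψ x (0, 1) := by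
      rw [← integral_neg]; congr 1 with x; ring
    rw [this, hB, neg_neg]
  rw [hneg, hA] at hE2
  linarith
end

section
/- Let Ω ⊆ ℝ² be a nonempty open set and let u : ℝ² → ℝ be locally integrable on Ω with weak gradient g = (g₁,g₂) on Ω. Then the set {x = (x₁,x₂) ∈ Ω : u(x) − x₁ g₁(x) = 0 and 1 + x₁ g₂(x) = 0} is not of full Lebesgue measure in Ω; its complement in Ω has positive two-dimensional Lebesgue measure. (This is the graph case f(x₁,x₂) = (u(x₁,x₂), x₁, x₂) of the lemma stating that the Heisenberg contact system must fail on a set of positive measure for every Sobolev graph parametrization.) -/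
open MeasureTheory
open scoped ENNReal

/- ### Auxiliary lemmas -/

lemma my_intOn {Ω : Set (ℝ × ℝ)} (hΩ : IsOpen Ω) {u v : ℝ × ℝ → ℝ}
    (hu : LocallyIntegrableOn u Ω volume) (hv : Continuous v) (hvc : HasCompactSupport v)
    (hvs : tsupport v ⊆ Ω) : IntegrableOn (fun x => u x * v x) Ω volume := by
  have hK : IsCompact (tsupport v) := hvc
  have hu' : IntegrableOn u (tsupport v) volume := hu.integrableOn_compact_subset hvs hK
  obtain ⟨C, hC⟩ := (hv.norm).bounded_above_of_compact_support hvc.norm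
  have h1 : IntegrableOn (fun x => v x * u x) (tsupport v) volume :=
    hu'.bdd_mul (c := C) hv.aestronglyMeasurable.restrict (Filter.Eventually.of_forall fun x => by simpa using hC x)
  have h2 : IntegrableOn (fun x => u x * v x) (tsupport v) volume := by
    simpa [mul_comm] using h1
  rw [show IntegrableOn (fun x => u x * v x) Ω volume ↔ _ from
    (integrable_indicator_iff hΩ.measurableSet).symm]
  rw [show IntegrableOn (fun x => u x * v x) (tsupport v) volume ↔ _ from
    (integrable_indicator_iff (isClosed_tsupport v).measurableSet).symm] at h2
  convert h2 using 1
  funext x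
  by_cases hx : x ∈ tsupport v
  · simp [Set.indicator_of_mem hx, Set.indicator_of_mem (hvs hx)]
  · have : v x = 0 := image_eq_zero_of_notMem_tsupport hx
    by_cases hx' : x ∈ Ω <;> simp [Set.indicator_of_notMem hx, hx', this]

lemma my_smooth_app {ψ : ℝ × ℝ → ℝ} (hψ : ContDiff ℝ (⊤ : ℕ∞) ψ) (v : ℝ × ℝ) :
    ContDiff ℝ (⊤ : ℕ∞) (fun x => fderiv ℝ ψ x v) :=
  (hψ.fderiv_right (by exact_mod_cast le_top)).clm_apply contDiff_const

lemma my_symm {ψ : ℝ × ℝ → ℝ} (hψ : ContDiff ℝ (⊤ : ℕ∞) ψ) (x v w : ℝ × ℝ) :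
    fderiv ℝ (fun y => fderiv ℝ ψ y v) x w = fderiv ℝ (fun y => fderiv ℝ ψ y w) x v := by
  have hF : ContDiff ℝ (⊤ : ℕ∞) (fderiv ℝ ψ) := hψ.fderiv_right (by exact_mod_cast le_top)
  have hFd : DifferentiableAt ℝ (fderiv ℝ ψ) x := (hF.differentiable (by simp)) x
  have key : ∀ a b : ℝ × ℝ, fderiv ℝ (fun y => fderiv ℝ ψ y a) x b
      = fderiv ℝ (fderiv ℝ ψ) x b a := by
    intro a b
    rw [fderiv_clm_apply hFd (differentiableAt_const a)]
    simp
  rw [key, key]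
  exact second_derivative_symmetric
    (fun y => ((hψ.differentiable (by simp)) y).hasFDerivAt)
    hFd.hasFDerivAt w v

lemma my_prod (A : ℝ × ℝ → ℝ) (hA : Differentiable ℝ A) (x v : ℝ × ℝ) :
    fderiv ℝ (fun y : ℝ × ℝ => y.1 * A y) x v = v.1 * A x + x.1 * fderiv ℝ A x v := by
  rw [fderiv_fun_mul (differentiable_fst.differentiableAt) (hA x)]
  rw [fderiv_fst]
  simp [mul_comm]
  ring

lemma my_supp {ψ : ℝ × ℝ → ℝ} (v : ℝ × ℝ) :
    Function.support (fun x => fderiv ℝ ψ x v) ⊆ tsupport ψ := by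
  intro x hx
  apply support_fderiv_subset ℝ (f := ψ)
  simp only [Function.mem_support] at hx ⊢
  intro h; exact hx (by simp [h])

lemma my_integral_fderiv_zero {ψ : ℝ × ℝ → ℝ} (hψ : ContDiff ℝ (⊤ : ℕ∞) ψ)
    (hψc : HasCompactSupport ψ) (v : ℝ × ℝ) :
    ∫ x : ℝ × ℝ, fderiv ℝ ψ x v = 0 := by
  have hd : Differentiable ℝ ψ := hψ.differentiable (by simp)
  have hcont : Continuous (fun x => fderiv ℝ ψ x v) := (my_smooth_app hψ v).continuous
  have hcs : HasCompactSupport (fun x => fderiv ℝ ψ x v) := by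
    apply HasCompactSupport.intro hψc
    intro x hx
    have : fderiv ℝ ψ x = 0 := by
      by_contra hne
      exact hx (support_fderiv_subset ℝ (f := ψ) (by simpa using hne))
    simp [this]
  have h := integral_mul_fderiv_eq_neg_fderiv_mul_of_integrable
    (f := fun _ : ℝ × ℝ => (1:ℝ)) (g := ψ) (v := v) (μ := volume)
    (by simpa using (integrable_zero _ _ _ : Integrable (fun _ : ℝ × ℝ => (0:ℝ)) volume))
    (by simpa using hcont.integrable_of_hasCompactSupport hcs)
    (by simpa using hψ.continuous.integrable_of_hasCompactSupport hψc)
    (fun x _ => (differentiable_const (1:ℝ)) x) (fun x _ => hd x)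
  simpa using h

/-- For a Sobolev graph parametrization `f(x₁,x₂) = (u(x₁,x₂), x₁, x₂)` of a surface in the
Heisenberg group `ℍ¹`, the contact system (here `u − x₁g₁ = 0` and `1 + x₁g₂ = 0`) must fail
on a set of positive Lebesgue measure. -/
theorem contact_fails_on_positive_measure_graph1
    (Ω : Set (ℝ × ℝ)) (hΩ : IsOpen Ω) (hne : Ω.Nonempty)
    (u g₁ g₂ : ℝ × ℝ → ℝ) (hu : HasWeakGradientOn u g₁ g₂ Ω) :
    0 < volume {x ∈ Ω | ¬ (u x - x.1 * g₁ x = 0 ∧ 1 + x.1 * g₂ x = 0)} := by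
  obtain ⟨huli, hg1li, hg2li, hA, hB⟩ := hu
  by_contra hcon
  have h0 : volume {x ∈ Ω | ¬ (u x - x.1 * g₁ x = 0 ∧ 1 + x.1 * g₂ x = 0)} = 0 :=
    le_antisymm (not_lt.mp hcon) zero_le
  -- a.e. on Ω, the contact equations hold
  have hae : ∀ᵐ x ∂(volume.restrict Ω), u x = x.1 * g₁ x ∧ x.1 * g₂ x = -1 := by
    rw [ae_iff]
    rw [Measure.restrict_apply' hΩ.measurableSet]
    rw [← le_zero_iff]
    refine le_trans (measure_mono ?_) (le_of_eq h0)
    rintro x ⟨hx1, hx2⟩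
    exact ⟨hx2, fun hP => hx1 ⟨sub_eq_zero.mp hP.1, by linarith [hP.2]⟩⟩
  have hae1 : ∀ᵐ x ∂(volume.restrict Ω), u x = x.1 * g₁ x := hae.mono fun x hx => hx.1
  have hae2 : ∀ᵐ x ∂(volume.restrict Ω), x.1 * g₂ x = -1 := hae.mono fun x hx => hx.2
  -- pick a closed ball inside Ω on which `x.1` is bounded away from `0`
  obtain ⟨x₀, hx₀⟩ := hne
  obtain ⟨ε, hε, hball⟩ := Metric.isOpen_iff.mp hΩ x₀ hx₀
  set sgn : ℝ := if 0 ≤ x₀.1 then 1 else -1 with hsgn_def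
  have hsgn_cases : sgn = 1 ∨ sgn = -1 := by
    rw [hsgn_def]; split <;> simp
  have hsgn_sq : sgn * sgn = 1 := by rcases hsgn_cases with h | h <;> rw [h] <;> norm_num
  have habs : |sgn| = 1 := by rcases hsgn_cases with h | h <;> rw [h] <;> norm_num
  have hsgn_ne : sgn ≠ 0 := by rcases hsgn_cases with h | h <;> rw [h] <;> norm_num
  have hsgn0 : 0 ≤ sgn * x₀.1 := by
    rw [hsgn_def]; split
    · simpa
    · rename_i h; push_neg at h; nlinarith
  set c : ℝ × ℝ := (x₀.1 + sgn * (ε/2), x₀.2) with hc_def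
  have hc1 : ε/2 ≤ sgn * c.1 := by
    have : sgn * c.1 = sgn * x₀.1 + (sgn * sgn) * (ε/2) := by rw [hc_def]; ring
    rw [this, hsgn_sq]; linarith
  have hcball : Metric.closedBall c (ε/4) ⊆ Ω := by
    intro x hx
    apply hball
    have h1 : dist x c ≤ ε/4 := Metric.mem_closedBall.mp hx
    have h2 : dist c x₀ ≤ ε/2 := by
      rw [Prod.dist_eq]
      have ha : dist c.1 x₀.1 = ε/2 := by
        show dist (x₀.1 + sgn * (ε/2)) x₀.1 = ε/2
        rw [Real.dist_eq, show x₀.1 + sgn * (ε/2) - x₀.1 = sgn * (ε/2) by ring,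
          abs_mul, habs, one_mul, abs_of_pos (by linarith : (0:ℝ) < ε/2)]
      have hb : dist c.2 x₀.2 = 0 := by
        show dist x₀.2 x₀.2 = 0
        simp
      rw [ha, hb]
      simp; linarith
    have := dist_triangle x c x₀
    rw [Metric.mem_ball]
    linarith
  have hsgnx : ∀ x ∈ Metric.closedBall c (ε/4), ε/4 ≤ sgn * x.1 := by
    intro x hx
    have h1 : dist x.1 c.1 ≤ ε/4 :=
      le_trans (by rw [Prod.dist_eq]; exact le_max_left _ _) (Metric.mem_closedBall.mp hx)
    rw [Real.dist_eq] at h1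
    have h3 : |sgn * (x.1 - c.1)| ≤ ε/4 := by rw [abs_mul, habs, one_mul]; exact h1
    have h4 : sgn * (x.1 - c.1) = sgn * x.1 - sgn * c.1 := by ring
    obtain ⟨h5, h6⟩ := abs_le.mp h3
    linarith
  -- the bump function
  have h8 : (0:ℝ) < ε/8 := by linarith
  let f : ContDiffBump c := ⟨ε/8, ε/4, h8, by linarith⟩
  set ψ : ℝ × ℝ → ℝ := fun x => f x with hψ_def
  have hψ : ContDiff ℝ (⊤ : ℕ∞) ψ := f.contDiff
  have hψc : HasCompactSupport ψ := f.hasCompactSupport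
  have hψts : tsupport ψ = Metric.closedBall c (ε/4) := f.tsupport_eq
  have hψΩ : tsupport ψ ⊆ Ω := by rw [hψts]; exact hcball
  have hdiff : ∀ v : ℝ × ℝ, Differentiable ℝ (fun x => fderiv ℝ ψ x v) := fun v =>
    (my_smooth_app hψ v).differentiable (by simp)
  -- compact support facts
  have hts_fd : ∀ v : ℝ × ℝ, tsupport (fun x => fderiv ℝ ψ x v) ⊆ tsupport ψ := fun v =>
    closure_minimal (my_supp v) (isClosed_tsupport ψ)
  have hcs_fd : ∀ v : ℝ × ℝ, HasCompactSupport (fun x => fderiv ℝ ψ x v) := fun v =>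
    IsCompact.of_isClosed_subset hψc (isClosed_tsupport _) (hts_fd v)
  -- test function φ₁ = x₁ ∂₂ψ
  have hsupp₁ : Function.support (fun x : ℝ × ℝ => x.1 * fderiv ℝ ψ x (0,1)) ⊆ tsupport ψ := by
    intro x hx
    apply my_supp (ψ := ψ) (0,1)
    simp only [Function.mem_support] at hx ⊢
    intro h; exact hx (by rw [h]; ring)
  have hφ₁ : ContDiff ℝ (⊤ : ℕ∞) (fun x : ℝ × ℝ => x.1 * fderiv ℝ ψ x (0,1)) :=
    contDiff_fst.mul (my_smooth_app hψ (0,1))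
  have hφ₁c : HasCompactSupport (fun x : ℝ × ℝ => x.1 * fderiv ℝ ψ x (0,1)) :=
    IsCompact.of_isClosed_subset hψc (isClosed_tsupport _)
      (closure_minimal hsupp₁ (isClosed_tsupport ψ))
  have hφ₁Ω : tsupport (fun x : ℝ × ℝ => x.1 * fderiv ℝ ψ x (0,1)) ⊆ Ω :=
    (closure_minimal hsupp₁ (isClosed_tsupport ψ)).trans hψΩ
  -- test function φ₂ = x₁ ∂₁ψ
  have hsupp₂ : Function.support (fun x : ℝ × ℝ => x.1 * fderiv ℝ ψ x (1,0)) ⊆ tsupport ψ := by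
    intro x hx
    apply my_supp (ψ := ψ) (1,0)
    simp only [Function.mem_support] at hx ⊢
    intro h; exact hx (by rw [h]; ring)
  have hφ₂ : ContDiff ℝ (⊤ : ℕ∞) (fun x : ℝ × ℝ => x.1 * fderiv ℝ ψ x (1,0)) :=
    contDiff_fst.mul (my_smooth_app hψ (1,0))
  have hφ₂c : HasCompactSupport (fun x : ℝ × ℝ => x.1 * fderiv ℝ ψ x (1,0)) :=
    IsCompact.of_isClosed_subset hψc (isClosed_tsupport _)
      (closure_minimal hsupp₂ (isClosed_tsupport ψ))
  have hφ₂Ω : tsupport (fun x : ℝ × ℝ => x.1 * fderiv ℝ ψ x (1,0)) ⊆ Ω :=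
    (closure_minimal hsupp₂ (isClosed_tsupport ψ)).trans hψΩ
  -- abbreviation: r = ∂₁∂₂ψ
  set r : ℝ × ℝ → ℝ := fun x => fderiv ℝ (fun y => fderiv ℝ ψ y (0,1)) x (1,0) with hr_def
  -- integrability facts
  have I₁ : IntegrableOn (fun x => u x * fderiv ℝ ψ x (0,1)) Ω volume :=
    my_intOn hΩ huli (my_smooth_app hψ (0,1)).continuous (hcs_fd (0,1)) ((hts_fd (0,1)).trans hψΩ)
  have hr_supp : Function.support (fun x : ℝ × ℝ => x.1 * r x) ⊆ tsupport ψ := by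
    intro x hx
    have : r x ≠ 0 := by
      simp only [Function.mem_support] at hx
      intro h; exact hx (by rw [hr_def] at h ⊢; rw [h]; ring)
    have hx' : x ∈ Function.support (fun y => fderiv ℝ (fun z => fderiv ℝ ψ z (0,1)) y (1,0)) := by
      simpa [hr_def] using this
    exact (hts_fd (0,1)) (my_supp (ψ := fun y => fderiv ℝ ψ y (0,1)) (1,0) hx')
  have hr_cont : Continuous (fun x : ℝ × ℝ => x.1 * r x) := by
    exact continuous_fst.mul (my_smooth_app (my_smooth_app hψ (0,1)) (1,0)).continuous
  have hr_cs : HasCompactSupport (fun x : ℝ × ℝ => x.1 * r x) :=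
    IsCompact.of_isClosed_subset hψc (isClosed_tsupport _)
      (closure_minimal hr_supp (isClosed_tsupport ψ))
  have I₂ : IntegrableOn (fun x => u x * (x.1 * r x)) Ω volume :=
    my_intOn hΩ huli hr_cont hr_cs ((closure_minimal hr_supp (isClosed_tsupport ψ)).trans hψΩ)
  -- Step 1: ∫ u ∂₂ψ = -∫ g₂ ψ
  have step1 := hB ψ hψ hψc hψΩ
  -- Step 2: with φ₁
  have step2 := hA _ hφ₁ hφ₁c hφ₁Ω
  have lhs2 : (∫ x in Ω, u x * fderiv ℝ (fun x : ℝ × ℝ => x.1 * fderiv ℝ ψ x (0,1)) x (1,0))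
      = (∫ x in Ω, u x * fderiv ℝ ψ x (0,1)) + ∫ x in Ω, u x * (x.1 * r x) := by
    rw [← integral_add I₁ I₂]
    apply integral_congr_ae
    apply Filter.Eventually.of_forall
    intro x
    show u x * fderiv ℝ (fun x : ℝ × ℝ => x.1 * fderiv ℝ ψ x (0,1)) x (1,0)
      = u x * fderiv ℝ ψ x (0,1) + u x * (x.1 * r x)
    have h := my_prod (fun y => fderiv ℝ ψ y (0,1)) (hdiff (0,1)) x (1,0)
    have hfold : (fderiv ℝ (fun y => fderiv ℝ ψ y (0,1)) x) (1,0) = r x := rfl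
    rw [h, hfold]
    ring
  have rhs2 : (∫ x in Ω, g₁ x * (x.1 * fderiv ℝ ψ x (0,1)))
      = ∫ x in Ω, u x * fderiv ℝ ψ x (0,1) := by
    apply integral_congr_ae
    refine hae1.mono fun x hx => ?_
    show g₁ x * (x.1 * fderiv ℝ ψ x (0,1)) = u x * fderiv ℝ ψ x (0,1)
    calc g₁ x * (x.1 * fderiv ℝ ψ x (0,1)) = (x.1 * g₁ x) * fderiv ℝ ψ x (0,1) := by ring
    _ = u x * fderiv ℝ ψ x (0,1) := by rw [← hx]
  rw [lhs2, rhs2] at step2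
  -- Step 3: with φ₂
  have step3 := hB _ hφ₂ hφ₂c hφ₂Ω
  have lhs3 : (∫ x in Ω, u x * fderiv ℝ (fun x : ℝ × ℝ => x.1 * fderiv ℝ ψ x (1,0)) x (0,1))
      = ∫ x in Ω, u x * (x.1 * r x) := by
    apply integral_congr_ae
    apply Filter.Eventually.of_forall
    intro x
    show u x * fderiv ℝ (fun x : ℝ × ℝ => x.1 * fderiv ℝ ψ x (1,0)) x (0,1)
      = u x * (x.1 * r x)
    have h := my_prod (fun y => fderiv ℝ ψ y (1,0)) (hdiff (1,0)) x (0,1)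
    have hfold : (fderiv ℝ (fun y => fderiv ℝ ψ y (0,1)) x) (1,0) = r x := rfl
    rw [h, my_symm hψ x (1,0) (0,1), hfold]
    ring
  have rhs3 : (∫ x in Ω, g₂ x * (x.1 * fderiv ℝ ψ x (1,0))) = 0 := by
    have e1 : (∫ x in Ω, g₂ x * (x.1 * fderiv ℝ ψ x (1,0)))
        = ∫ x in Ω, -(fderiv ℝ ψ x (1,0)) := by
      apply integral_congr_ae
      refine hae2.mono fun x hx => ?_
      show g₂ x * (x.1 * fderiv ℝ ψ x (1,0)) = -(fderiv ℝ ψ x (1,0))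
      calc g₂ x * (x.1 * fderiv ℝ ψ x (1,0)) = (x.1 * g₂ x) * fderiv ℝ ψ x (1,0) := by ring
      _ = -(fderiv ℝ ψ x (1,0)) := by rw [hx]; ring
    rw [e1, integral_neg, neg_eq_zero]
    rw [setIntegral_eq_integral_of_forall_compl_eq_zero (fun x hx => ?_)]
    · exact my_integral_fderiv_zero hψ hψc (1,0)
    · by_contra hne
      exact hx (hψΩ (my_supp (ψ := ψ) (1,0) (by simpa using hne)))
  rw [lhs3, rhs3] at step3
  -- combine: ∫ g₂ ψ = 0
  have hT : (∫ x in Ω, g₂ x * ψ x) = 0 := by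
    have ha : (∫ x in Ω, u x * fderiv ℝ ψ x (0,1)) = 0 := by linarith
    rw [← neg_eq_zero, ← step1, ha]
  -- restrict to the closed ball S
  set S : Set (ℝ × ℝ) := Metric.closedBall c (ε/4) with hS_def
  have hTS : (∫ x in Ω, g₂ x * ψ x) = ∫ x in S, g₂ x * ψ x := by
    rw [← integral_indicator hΩ.measurableSet, ← integral_indicator measurableSet_closedBall]
    congr 1
    funext x
    by_cases hx : x ∈ S
    · rw [Set.indicator_of_mem hx, Set.indicator_of_mem (hcball hx)]
    · have hψ0 : ψ x = 0 := image_eq_zero_of_notMem_tsupport (by rw [hψts]; exact hx)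
      rw [Set.indicator_of_notMem hx]
      by_cases hx' : x ∈ Ω
      · rw [Set.indicator_of_mem hx']; rw [hψ0]; ring
      · rw [Set.indicator_of_notMem hx']
  have haeS : ∀ᵐ x ∂(volume.restrict S), x.1 * g₂ x = -1 :=
    ae_restrict_of_ae_restrict_of_subset hcball hae2
  have hmemS : ∀ᵐ x ∂(volume.restrict S), x ∈ S := ae_restrict_mem measurableSet_closedBall
  -- pointwise facts on S
  have hposS : ∀ x ∈ S, 0 < sgn / x.1 := by
    intro x hx
    have h1 : ε/4 ≤ sgn * x.1 := hsgnx x hx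
    have hx1 : x.1 ≠ 0 := by
      intro h; rw [h, mul_zero] at h1; linarith
    have h2 : sgn / x.1 = (sgn * x.1) / (x.1 * x.1) := by
      rw [div_eq_div_iff hx1 (mul_self_ne_zero.mpr hx1)]; ring
    rw [h2]
    exact div_pos (by linarith) (mul_self_pos.mpr hx1)
  have hcongr : (fun x => g₂ x * ψ x)
      =ᵐ[volume.restrict S] (fun x => -sgn * (ψ x * (sgn / x.1))) := by
    refine (haeS.and hmemS).mono fun x ⟨hx2, hxS⟩ => ?_
    have h1 : ε/4 ≤ sgn * x.1 := hsgnx x hxS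
    have hx1 : x.1 ≠ 0 := by
      intro h; rw [h, mul_zero] at h1; linarith
    have hg : g₂ x = -1 / x.1 := by
      rw [eq_div_iff hx1]; linarith [hx2]
    show g₂ x * ψ x = -sgn * (ψ x * (sgn / x.1))
    rw [hg]
    have : -sgn * (ψ x * (sgn / x.1)) = -((sgn * sgn) * ψ x) / x.1 := by ring
    rw [this, hsgn_sq]
    ring
  -- the integral of ψ(x)·(sgn/x₁) over S is zero...
  have hq0 : (∫ x in S, ψ x * (sgn / x.1)) = 0 := by
    have h1 : (∫ x in S, g₂ x * ψ x) = -sgn * ∫ x in S, ψ x * (sgn / x.1) := by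
      rw [integral_congr_ae hcongr, integral_const_mul]
    have h2 : -sgn * (∫ x in S, ψ x * (sgn / x.1)) = 0 := by rw [← h1, ← hTS, hT]
    have := mul_eq_zero.mp h2
    rcases this with h | h
    · exact absurd (neg_eq_zero.mp h) hsgn_ne
    · exact h
  -- ...but it is positive: contradiction
  have hint : IntegrableOn (fun x => ψ x * (sgn / x.1)) S volume := by
    have h1 : IntegrableOn (fun x => g₂ x * ψ x) Ω volume :=
      my_intOn hΩ hg2li hψ.continuous hψc hψΩ
    refine Integrable.congr ((h1.mono_set hcball).const_mul (-sgn)) ?_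
    refine hcongr.mono fun x hx => ?_
    have hx' : g₂ x * ψ x = -sgn * (ψ x * (sgn / x.1)) := hx
    show -sgn * (g₂ x * ψ x) = ψ x * (sgn / x.1)
    rw [hx']
    have h2 : -sgn * (-sgn * (ψ x * (sgn / x.1))) = (sgn * sgn) * (ψ x * (sgn / x.1)) := by ring
    rw [h2, hsgn_sq, one_mul]
  have hnn : 0 ≤ᵐ[volume.restrict S] (fun x => ψ x * (sgn / x.1)) := by
    refine hmemS.mono fun x hx => ?_
    exact mul_nonneg f.nonneg (le_of_lt (hposS x hx))
  have hsupp_pos : 0 < volume (Function.support (fun x => ψ x * (sgn / x.1)) ∩ S) := by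
    refine lt_of_lt_of_le (Metric.measure_ball_pos volume c h8) (measure_mono ?_)
    intro x hx
    have hx8 : x ∈ Metric.closedBall c (ε/8) := Metric.ball_subset_closedBall hx
    have hxS : x ∈ S := Metric.closedBall_subset_closedBall (by linarith) hx8
    have hψ1 : ψ x = 1 := f.one_of_mem_closedBall hx8
    refine ⟨?_, hxS⟩
    simp only [Function.mem_support]
    rw [hψ1, one_mul]
    exact ne_of_gt (hposS x hxS)
  have := (setIntegral_pos_iff_support_of_nonneg_ae hnn hint).mpr hsupp_pos
  rw [hq0] at this
  exact lt_irrefl 0 this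
end

section
/- Let Ω ⊆ ℝ² be a nonempty open set and let u : ℝ² → ℝ be locally integrable on Ω with weak gradient g = (g₁,g₂) on Ω. Then the set {x = (x₁,x₂) ∈ Ω : x₁ g₁(x) − u(x) = 0 and x₁ g₂(x) = 1} is not of full Lebesgue measure in Ω; its complement in Ω has positive two-dimensional Lebesgue measure. (This is the graph case f(x₁,x₂) = (x₁, u(x₁,x₂), x₂) of the lemma stating that the Heisenberg contact system must fail on a set of positive measure for every Sobolev graph parametrization.) -/
open MeasureTheory
open scoped ENNReal

section Aux

lemma aux_one_le_top : (1 : WithTop ℕ∞) ≤ ((⊤ : ℕ∞) : WithTop ℕ∞) := by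
  exact_mod_cast (le_top : (1 : ℕ∞) ≤ ⊤)

lemma aux_two_le_top : (2 : WithTop ℕ∞) ≤ ((⊤ : ℕ∞) : WithTop ℕ∞) := by
  rw [show ((2 : WithTop ℕ∞)) = ((2 : ℕ∞) : WithTop ℕ∞) by rfl]
  exact_mod_cast (le_top : (2 : ℕ∞) ≤ ⊤)

/-- Smoothness, compact support and support bound for directional derivative functions. -/
lemma aux_deriv_props {ρ : ℝ × ℝ → ℝ} (hρ : ContDiff ℝ (⊤ : ℕ∞) ρ)
    (hc : HasCompactSupport ρ) (v : ℝ × ℝ) :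
    ContDiff ℝ (⊤ : ℕ∞) (fun x => fderiv ℝ ρ x v) ∧
      HasCompactSupport (fun x => fderiv ℝ ρ x v) ∧
      tsupport (fun x => fderiv ℝ ρ x v) ⊆ tsupport ρ := by
  have h1 : ContDiff ℝ (⊤ : ℕ∞) (fderiv ℝ ρ) := (contDiff_infty_iff_fderiv.mp hρ).2
  refine ⟨h1.clm_apply contDiff_const, ?_, ?_⟩
  · exact (hc.fderiv ℝ).comp_left (g := fun L : (ℝ × ℝ) →L[ℝ] ℝ => L v) rfl
  · refine (closure_mono ?_).trans (tsupport_fderiv_subset ℝ (f := ρ))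
    intro x hx
    simp only [Function.mem_support] at hx ⊢
    intro h
    exact hx (by rw [h]; rfl)

/-- `x ↦ x₁ * θ x` : smoothness, compact support, support bound. -/
lemma aux_mul_props {θ : ℝ × ℝ → ℝ} (hθ : ContDiff ℝ (⊤ : ℕ∞) θ)
    (hc : HasCompactSupport θ) :
    ContDiff ℝ (⊤ : ℕ∞) (fun x : ℝ × ℝ => x.1 * θ x) ∧
      HasCompactSupport (fun x : ℝ × ℝ => x.1 * θ x) ∧
      tsupport (fun x : ℝ × ℝ => x.1 * θ x) ⊆ tsupport θ := by
  have hsupp : Function.support (fun x : ℝ × ℝ => x.1 * θ x) ⊆ Function.support θ := by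
    intro x hx
    simp only [Function.mem_support] at hx ⊢
    intro h; exact hx (by rw [h, mul_zero])
  refine ⟨(contDiff_fst (𝕜 := ℝ)).mul hθ, ?_, closure_mono hsupp⟩
  exact IsCompact.of_isClosed_subset hc isClosed_closure
    ((closure_mono hsupp).trans subset_rfl)

/-- Product rule for `x ↦ x₁ * θ x`. -/
lemma aux_fderiv_mul (θ : ℝ × ℝ → ℝ) (hθ : ContDiff ℝ (⊤ : ℕ∞) θ) (x v : ℝ × ℝ) :
    fderiv ℝ (fun y : ℝ × ℝ => y.1 * θ y) x v
      = x.1 * fderiv ℝ θ x v + θ x * v.1 := by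
  have h := (hasFDerivAt_fst (𝕜 := ℝ) (p := x)).mul
    ((hθ.differentiable (by simp) x).hasFDerivAt)
  rw [show (fun y : ℝ × ℝ => y.1 * θ y) = (Prod.fst * θ) from rfl, h.fderiv]
  simp [mul_comm]

/-- The integral of a directional derivative of a compactly supported smooth function vanishes. -/
lemma aux_integral_fderiv_zero {ρ : ℝ × ℝ → ℝ} (hρ : ContDiff ℝ (⊤ : ℕ∞) ρ)
    (hc : HasCompactSupport ρ) (v : ℝ × ℝ) :
    ∫ x : ℝ × ℝ, fderiv ℝ ρ x v = 0 := by
  obtain ⟨hψ, hψc, _⟩ := aux_deriv_props hρ hc v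
  have h2 : Integrable (fun x : ℝ × ℝ => (1 : ℝ) * fderiv ℝ ρ x v) volume := by
    simpa using hψ.continuous.integrable_of_hasCompactSupport hψc
  have h3 : Integrable (fun x : ℝ × ℝ => (1 : ℝ) * ρ x) volume := by
    simpa using hρ.continuous.integrable_of_hasCompactSupport hc
  have h1 : Integrable (fun x : ℝ × ℝ => fderiv ℝ (fun _ : ℝ × ℝ => (1 : ℝ)) x v * ρ x)
      volume := by
    simp only [fderiv_fun_const, Pi.zero_apply, ContinuousLinearMap.zero_apply, zero_mul]
    exact integrable_zero (ℝ × ℝ) ℝ (volume : Measure (ℝ × ℝ))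
  have := integral_mul_fderiv_eq_neg_fderiv_mul_of_integrable (μ := volume)
      (f := fun _ : ℝ × ℝ => (1 : ℝ)) (g := ρ) (v := v) h1 h2 h3
      (fun x _ => differentiableAt_const _) (fun x _ => hρ.differentiable (by simp) x)
  simpa [fderiv_fun_const] using this

/-- Multiplying a function locally integrable on `Ω` by a continuous function compactly
supported inside `Ω` gives a function integrable on `Ω`. -/
lemma aux_mul_integrableOn {Ω : Set (ℝ × ℝ)} {u φ : ℝ × ℝ → ℝ}
    (hu : LocallyIntegrableOn u Ω volume) (hφ : Continuous φ)
    (hφc : HasCompactSupport φ) (hφs : tsupport φ ⊆ Ω) :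
    IntegrableOn (fun x => u x * φ x) Ω volume := by
  have huK : IntegrableOn u (tsupport φ) volume :=
    hu.integrableOn_compact_subset hφs hφc
  have h2 : IntegrableOn (fun x => φ x * u x) (tsupport φ) volume :=
    huK.bdd_mul hφ.aestronglyMeasurable.restrict
      (ae_of_all _ (hφ.bounded_above_of_compact_support hφc).choose_spec)
  have hsub : Function.support (fun x => φ x * u x) ⊆ tsupport φ := by
    intro x hx
    refine subset_closure ?_
    simp only [Function.mem_support] at hx ⊢
    intro h; exact hx (by rw [h, zero_mul])
  have h3 : Integrable (fun x => φ x * u x) volume := by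
    rw [← integrableOn_iff_integrable_of_support_subset hsub]
    exact h2
  exact (h3.congr (ae_of_all _ fun x => mul_comm _ _)).integrableOn

end Aux

/-- For a Sobolev graph parametrization `f(x₁,x₂) = (x₁, u(x₁,x₂), x₂)` of a surface in the
Heisenberg group `ℍ¹`, the contact system (here `x₁g₁ − u = 0` and `x₁g₂ = 1`) must fail
on a set of positive Lebesgue measure. -/
theorem contact_fails_on_positive_measure_graph2
    (Ω : Set (ℝ × ℝ)) (hΩ : IsOpen Ω) (hne : Ω.Nonempty)
    (u g₁ g₂ : ℝ × ℝ → ℝ) (hu : HasWeakGradientOn u g₁ g₂ Ω) :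
    0 < volume {x ∈ Ω | ¬ (x.1 * g₁ x - u x = 0 ∧ x.1 * g₂ x = 1)} := by
  obtain ⟨huI, hg1I, hg2I, hw1, hw2⟩ := hu
  by_contra hpos
  have hS : volume {x ∈ Ω | ¬ (x.1 * g₁ x - u x = 0 ∧ x.1 * g₂ x = 1)} = 0 :=
    le_zero_iff.mp (not_lt.mp hpos)
  have hae : ∀ᵐ x : ℝ × ℝ, x ∈ Ω → (x.1 * g₁ x - u x = 0 ∧ x.1 * g₂ x = 1) := by
    rw [ae_iff]
    convert hS using 2
    ext x
    simp only [Set.mem_setOf_eq, Classical.not_imp, Set.mem_sep_iff]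
  have hae1 : ∀ᵐ x : ℝ × ℝ, x ∈ Ω → x.1 * g₁ x = u x := by
    filter_upwards [hae] with x hx hxΩ
    have := (hx hxΩ).1; linarith
  have hae2 : ∀ᵐ x : ℝ × ℝ, x ∈ Ω → x.1 * g₂ x = 1 := by
    filter_upwards [hae] with x hx hxΩ
    exact (hx hxΩ).2
  -- Key claim: ∫_Ω g₂ ρ = 0 for every test function ρ supported in Ω.
  have key : ∀ ρ : ℝ × ℝ → ℝ, ContDiff ℝ (⊤ : ℕ∞) ρ → HasCompactSupport ρ →
      tsupport ρ ⊆ Ω → ∫ x in Ω, g₂ x * ρ x = 0 := by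
    intro ρ hρ hρc hρs
    have hq1 := aux_deriv_props hρ hρc (1, 0)
    have hq2 := aux_deriv_props hρ hρc (0, 1)
    -- Step A : ∫ u·(x₁·∂₂∂₁ρ) = 0
    have hmul1 := aux_mul_props hq1.1 hq1.2.1
    have hA := hw2 (fun x : ℝ × ℝ => x.1 * fderiv ℝ ρ x (1, 0)) hmul1.1 hmul1.2.1
      (hmul1.2.2.trans (hq1.2.2.trans hρs))
    have hA2 : ∫ x in Ω, g₂ x * (x.1 * fderiv ℝ ρ x (1, 0))
        = ∫ x in Ω, fderiv ℝ ρ x (1, 0) := by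
      refine setIntegral_congr_ae hΩ.measurableSet ?_
      filter_upwards [hae2] with x hx hxΩ
      calc g₂ x * (x.1 * fderiv ℝ ρ x (1, 0))
          = (x.1 * g₂ x) * fderiv ℝ ρ x (1, 0) := by ring
        _ = fderiv ℝ ρ x (1, 0) := by rw [hx hxΩ, one_mul]
    have hA3 : ∫ x in Ω, fderiv ℝ ρ x (1, 0) = 0 := by
      rw [setIntegral_eq_integral_of_forall_compl_eq_zero (fun x hx => ?_)]
      · exact aux_integral_fderiv_zero hρ hρc (1, 0)
      · have hnt : x ∉ tsupport (fun y : ℝ × ℝ => fderiv ℝ ρ y (1, 0)) :=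
          fun h => hx ((hq1.2.2.trans hρs) h)
        simpa using image_eq_zero_of_notMem_tsupport hnt
    have stepA : ∫ x in Ω,
        u x * (x.1 * fderiv ℝ (fun y : ℝ × ℝ => fderiv ℝ ρ y (1, 0)) x (0, 1)) = 0 := by
      have e1 : ∫ x in Ω,
          u x * (x.1 * fderiv ℝ (fun y : ℝ × ℝ => fderiv ℝ ρ y (1, 0)) x (0, 1))
          = ∫ x in Ω, u x * fderiv ℝ (fun y : ℝ × ℝ => y.1 * fderiv ℝ ρ y (1, 0)) x (0, 1) := by
        refine integral_congr_ae (ae_of_all _ fun x => ?_)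
        simp only [aux_fderiv_mul (fun y : ℝ × ℝ => fderiv ℝ ρ y (1, 0)) hq1.1 x (0, 1)]
        ring
      rw [e1, hA, hA2, hA3, neg_zero]
    -- Step B
    have hmul2 := aux_mul_props hq2.1 hq2.2.1
    have hB := hw1 (fun x : ℝ × ℝ => x.1 * fderiv ℝ ρ x (0, 1)) hmul2.1 hmul2.2.1
      (hmul2.2.2.trans (hq2.2.2.trans hρs))
    have hB2 : ∫ x in Ω, g₁ x * (x.1 * fderiv ℝ ρ x (0, 1))
        = ∫ x in Ω, u x * fderiv ℝ ρ x (0, 1) := by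
      refine setIntegral_congr_ae hΩ.measurableSet ?_
      filter_upwards [hae1] with x hx hxΩ
      calc g₁ x * (x.1 * fderiv ℝ ρ x (0, 1))
          = (x.1 * g₁ x) * fderiv ℝ ρ x (0, 1) := by ring
        _ = u x * fderiv ℝ ρ x (0, 1) := by rw [hx hxΩ]
    have hq3 := aux_deriv_props hq2.1 hq2.2.1 (1, 0)
    have hmul3 := aux_mul_props hq3.1 hq3.2.1
    have hint1 : IntegrableOn
        (fun x => u x * (x.1 * fderiv ℝ (fun y : ℝ × ℝ => fderiv ℝ ρ y (0, 1)) x (1, 0)))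
        Ω volume :=
      aux_mul_integrableOn huI hmul3.1.continuous hmul3.2.1
        (hmul3.2.2.trans (hq3.2.2.trans (hq2.2.2.trans hρs)))
    have hint2 : IntegrableOn (fun x => u x * fderiv ℝ ρ x (0, 1)) Ω volume :=
      aux_mul_integrableOn huI hq2.1.continuous hq2.2.1 (hq2.2.2.trans hρs)
    have stepB : (∫ x in Ω,
          u x * (x.1 * fderiv ℝ (fun y : ℝ × ℝ => fderiv ℝ ρ y (0, 1)) x (1, 0)))
        + (∫ x in Ω, u x * fderiv ℝ ρ x (0, 1))
        = -∫ x in Ω, u x * fderiv ℝ ρ x (0, 1) := by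
      rw [← integral_add hint1 hint2]
      calc ∫ x in Ω,
            (u x * (x.1 * fderiv ℝ (fun y : ℝ × ℝ => fderiv ℝ ρ y (0, 1)) x (1, 0))
              + u x * fderiv ℝ ρ x (0, 1))
          = ∫ x in Ω, u x * fderiv ℝ (fun y : ℝ × ℝ => y.1 * fderiv ℝ ρ y (0, 1)) x (1, 0) := by
            refine integral_congr_ae (ae_of_all _ fun x => ?_)
            simp only [aux_fderiv_mul (fun y : ℝ × ℝ => fderiv ℝ ρ y (0, 1)) hq2.1 x (1, 0)]
            ring
        _ = -∫ x in Ω, g₁ x * (x.1 * fderiv ℝ ρ x (0, 1)) := hB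
        _ = -∫ x in Ω, u x * fderiv ℝ ρ x (0, 1) := by rw [hB2]
    -- symmetry of second derivatives
    have hD : ContDiff ℝ (⊤ : ℕ∞) (fderiv ℝ ρ) := (contDiff_infty_iff_fderiv.mp hρ).2
    have hfd : ∀ (v x : ℝ × ℝ),
        HasFDerivAt (fun y : ℝ × ℝ => fderiv ℝ ρ y v)
          ((ContinuousLinearMap.apply ℝ ℝ v).comp (fderiv ℝ (fderiv ℝ ρ) x)) x := by
      intro v x
      exact (ContinuousLinearMap.apply ℝ ℝ v).hasFDerivAt.comp x
        ((hD.differentiable (by simp)) x).hasFDerivAt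
    have hsymm : ∀ x : ℝ × ℝ,
        fderiv ℝ (fun y : ℝ × ℝ => fderiv ℝ ρ y (0, 1)) x (1, 0)
          = fderiv ℝ (fun y : ℝ × ℝ => fderiv ℝ ρ y (1, 0)) x (0, 1) := by
      intro x
      rw [(hfd (0, 1) x).fderiv, (hfd (1, 0) x).fderiv]
      exact (hρ.contDiffAt.isSymmSndFDerivAt (by rw [minSmoothness_of_isRCLikeNormedField]; exact aux_two_le_top)) (1, 0) (0, 1)
    have hBzero : ∫ x in Ω,
        u x * (x.1 * fderiv ℝ (fun y : ℝ × ℝ => fderiv ℝ ρ y (0, 1)) x (1, 0)) = 0 := by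
      have e2 : ∫ x in Ω,
          u x * (x.1 * fderiv ℝ (fun y : ℝ × ℝ => fderiv ℝ ρ y (0, 1)) x (1, 0))
          = ∫ x in Ω,
            u x * (x.1 * fderiv ℝ (fun y : ℝ × ℝ => fderiv ℝ ρ y (1, 0)) x (0, 1)) := by
        refine integral_congr_ae (ae_of_all _ fun x => ?_)
        simp only [hsymm x]
      rw [e2]; exact stepA
    have hI0 : ∫ x in Ω, u x * fderiv ℝ ρ x (0, 1) = 0 := by
      rw [hBzero, zero_add] at stepB
      linarith
    have hρ0 := hw2 ρ hρ hρc hρs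
    rw [hI0] at hρ0
    linarith
  -- conclude g₂ = 0 a.e. on Ω
  have hg2zero : ∀ᵐ x : ℝ × ℝ, x ∈ Ω → g₂ x = 0 := by
    refine hΩ.ae_eq_zero_of_integral_contDiff_smul_eq_zero hg2I ?_
    intro ρ hρ hρc hρs
    have h1 : ∫ x : ℝ × ℝ, ρ x • g₂ x = ∫ x in Ω, ρ x • g₂ x :=
      (setIntegral_eq_integral_of_forall_compl_eq_zero (fun x hx => by
        rw [image_eq_zero_of_notMem_tsupport (fun h => hx (hρs h)), zero_smul])).symm
    rw [h1, ← key ρ hρ hρc hρs]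
    exact integral_congr_ae (ae_of_all _ fun x => by simp [mul_comm])
  -- contradiction with x₁ g₂ = 1 a.e. on the nonempty open Ω
  have hΩ0 : volume Ω = 0 := by
    rw [measure_eq_zero_iff_ae_notMem]
    filter_upwards [hae2, hg2zero] with x h1 h2
    intro hx
    have := h1 hx
    rw [h2 hx, mul_zero] at this
    exact one_ne_zero this.symm
  exact absurd hΩ0 (hΩ.measure_pos volume hne).ne'
end

section
/- Let Ω ⊆ ℝ² be an open set, let u : ℝ² → ℝ be locally integrable on Ω with weak gradient g = (g₁,g₂) on Ω, and let v : ℝ² → ℝ be a smooth (C^∞) function. Suppose w : ℝ² → ℝ is locally integrable on Ω and has weak gradient on Ω equal almost everywhere to (u·∂₁v − v·g₁, u·∂₂v − v·g₂) (i.e. dw = u dv − v du weakly, the Heisenberg contact relation for the triple (u, v, w)). Then g₁(x)·∂₂v(x) − g₂(x)·∂₁v(x) = 0 for Lebesgue-almost every x ∈ Ω; that is, the weak gradient of u and the gradient of v are almost everywhere linearly dependent. -/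
open MeasureTheory
open scoped ENNReal

section Aux

lemma aux_infty_add_one_le : (⊤ : ℕ∞) + 1 ≤ ((⊤ : ℕ∞) : WithTop ℕ∞) := by
  rw [show ((1 : WithTop ℕ∞)) = (((1 : ℕ∞)) : WithTop ℕ∞) from rfl, ← WithTop.coe_add]
  exact WithTop.coe_le_coe.mpr le_top

lemma aux_contDiff_fderiv {ψ : ℝ × ℝ → ℝ} (hψ : ContDiff ℝ (⊤ : ℕ∞) ψ) :
    ContDiff ℝ (⊤ : ℕ∞) (fderiv ℝ ψ) :=
  hψ.fderiv_right (m := (⊤ : ℕ∞)) aux_infty_add_one_le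

lemma aux_schwarz {ψ : ℝ × ℝ → ℝ} (hψ : ContDiff ℝ (⊤ : ℕ∞) ψ) (x a b : ℝ × ℝ) :
    fderiv ℝ (fun y => fderiv ℝ ψ y a) x b = fderiv ℝ (fun y => fderiv ℝ ψ y b) x a := by
  have hd : DifferentiableAt ℝ (fderiv ℝ ψ) x :=
    ((aux_contDiff_fderiv hψ).differentiable (by simp)).differentiableAt
  have h1 : ∀ c : ℝ × ℝ, fderiv ℝ (fun y => fderiv ℝ ψ y c) x
      = (fderiv ℝ (fderiv ℝ ψ) x).flip c := by
    intro c
    rw [fderiv_clm_apply hd (differentiableAt_const c)]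
    simp
  have hsymm := hψ.contDiffAt.isSymmSndFDerivAt (x := x)
    (by rw [minSmoothness_of_isRCLikeNormedField]; exact WithTop.coe_le_coe.mpr le_top)
  rw [h1, h1]
  simpa using hsymm b a

/-- Properties of the directional derivative of a test function. -/
lemma aux_testD {φ : ℝ × ℝ → ℝ} (hφ : ContDiff ℝ (⊤ : ℕ∞) φ)
    (hφs : HasCompactSupport φ) (e : ℝ × ℝ) :
    ContDiff ℝ (⊤ : ℕ∞) (fun x => fderiv ℝ φ x e) ∧
    HasCompactSupport (fun x => fderiv ℝ φ x e) ∧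
    tsupport (fun x => fderiv ℝ φ x e) ⊆ tsupport φ := by
  refine ⟨(aux_contDiff_fderiv hφ).clm_apply contDiff_const, hφs.fderiv_apply ℝ e, ?_⟩
  refine subset_trans (closure_mono ?_) (closure_minimal (support_fderiv_subset ℝ)
    isClosed_closure)
  intro x hx
  simp only [Function.mem_support] at hx ⊢
  exact fun h => hx (by rw [h]; rfl)

lemma aux_support_fderiv_apply {φ : ℝ × ℝ → ℝ} (e : ℝ × ℝ) :
    Function.support (fun x => fderiv ℝ φ x e) ⊆ tsupport φ := by
  intro x hx
  apply support_fderiv_subset ℝ (f := φ)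
  simp only [Function.mem_support] at hx ⊢
  exact fun h => hx (by rw [h]; rfl)

lemma aux_integrableOn_mul {Ω : Set (ℝ × ℝ)} {f ψ : ℝ × ℝ → ℝ}
    (hf : LocallyIntegrableOn f Ω volume) (hψ : Continuous ψ)
    {K : Set (ℝ × ℝ)} (hK : IsCompact K) (hKΩ : K ⊆ Ω)
    (hsupp : Function.support ψ ⊆ K) :
    IntegrableOn (fun x => f x * ψ x) Ω volume := by
  have hfK : IntegrableOn f K volume := hf.integrableOn_compact_subset hKΩ hK
  have h1 : IntegrableOn (fun x => f x * ψ x) K volume :=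
    hfK.mul_continuousOn hψ.continuousOn hK
  have hs2 : Function.support (fun x => f x * ψ x) ⊆ K := by
    refine subset_trans ?_ hsupp
    intro x hx
    simp only [Function.mem_support] at hx ⊢
    exact fun h => hx (by rw [h, mul_zero])
  exact ((integrableOn_iff_integrable_of_support_subset hs2).mp h1).integrableOn

lemma aux_fderiv_mul_apply {a b : ℝ × ℝ → ℝ} (ha : Differentiable ℝ a)
    (hb : Differentiable ℝ b) (x e : ℝ × ℝ) :
    fderiv ℝ (fun y => a y * b y) x e
      = a x * fderiv ℝ b x e + b x * fderiv ℝ a x e := by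
  rw [fderiv_fun_mul (ha x) (hb x)]
  simp [smul_eq_mul]

/-- The weak "curl" identity: testing the two weak-derivative identities against the two
partial derivatives of a test function and using the symmetry of second derivatives. -/
lemma aux_weak_curl {Ω : Set (ℝ × ℝ)} (hΩ : IsOpen Ω) {u g₁ g₂ : ℝ × ℝ → ℝ}
    (hu : HasWeakGradientOn u g₁ g₂ Ω) {ψ : ℝ × ℝ → ℝ}
    (hψ : ContDiff ℝ (⊤ : ℕ∞) ψ) (hψs : HasCompactSupport ψ) (hψΩ : tsupport ψ ⊆ Ω) :
    ∫ x in Ω, g₁ x * fderiv ℝ ψ x (0, 1) = ∫ x in Ω, g₂ x * fderiv ℝ ψ x (1, 0) := by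
  obtain ⟨-, -, -, h1, h2⟩ := hu
  obtain ⟨c2, s2, t2⟩ := aux_testD hψ hψs (0, 1)
  obtain ⟨c1, s1, t1⟩ := aux_testD hψ hψs (1, 0)
  have e1 := h1 _ c2 s2 (t2.trans hψΩ)
  have e2 := h2 _ c1 s1 (t1.trans hψΩ)
  have hs : ∀ x : ℝ × ℝ, fderiv ℝ (fun y => fderiv ℝ ψ y ((0 : ℝ), (1 : ℝ))) x (1, 0)
      = fderiv ℝ (fun y => fderiv ℝ ψ y ((1 : ℝ), (0 : ℝ))) x (0, 1) := fun x =>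
    aux_schwarz hψ x _ _
  simp only [hs] at e1
  have := e1.symm.trans e2
  exact neg_inj.mp this

end Aux

/-- If `u ∈ W^{1,1}_loc(Ω)` has weak gradient `g`, `v` is smooth, and some `w` has weak
gradient `u ∇v − v g` on `Ω` (the Heisenberg contact relation `dw = u dv − v du`), then
`g₁ ∂₂v − g₂ ∂₁v = 0` a.e. on `Ω`: the weak gradient of `u` and the gradient of `v` are
almost everywhere linearly dependent. -/
theorem contact_relation_implies_dependent_gradients
    (Ω : Set (ℝ × ℝ)) (hΩ : IsOpen Ω)
    (u g₁ g₂ : ℝ × ℝ → ℝ) (hu : HasWeakGradientOn u g₁ g₂ Ω)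
    (v : ℝ × ℝ → ℝ) (hv : ContDiff ℝ (⊤ : ℕ∞) v)
    (w : ℝ × ℝ → ℝ)
    (hw : HasWeakGradientOn w
      (fun x => u x * fderiv ℝ v x (1, 0) - v x * g₁ x)
      (fun x => u x * fderiv ℝ v x (0, 1) - v x * g₂ x) Ω) :
    ∀ᵐ x ∂(volume.restrict Ω),
      g₁ x * fderiv ℝ v x (0, 1) - g₂ x * fderiv ℝ v x (1, 0) = 0 := by
  obtain ⟨huΩ, hg1Ω, hg2Ω, hu1, hu2⟩ := hu
  have hone : ((⊤ : ℕ∞) : WithTop ℕ∞) ≠ 0 := by simp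
  have hvd : Differentiable ℝ v := hv.differentiable hone
  have hvc : Continuous v := hv.continuous
  have hD1v : Continuous (fun x => fderiv ℝ v x ((1 : ℝ), (0 : ℝ))) :=
    ((aux_contDiff_fderiv hv).clm_apply contDiff_const).continuous
  have hD2v : Continuous (fun x => fderiv ℝ v x ((0 : ℝ), (1 : ℝ))) :=
    ((aux_contDiff_fderiv hv).clm_apply contDiff_const).continuous
  -- the key vanishing of distributional pairing
  have key : ∀ φ : ℝ × ℝ → ℝ, ContDiff ℝ (⊤ : ℕ∞) φ → HasCompactSupport φ →
      tsupport φ ⊆ Ω →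
      ∫ x in Ω, (g₁ x * fderiv ℝ v x (0, 1) - g₂ x * fderiv ℝ v x (1, 0)) * φ x = 0 := by
    intro φ hφ hφs hφΩ
    have hmeas := hΩ.measurableSet
    obtain ⟨cd1, sd1, td1⟩ := aux_testD hφ hφs (1, 0)
    obtain ⟨cd2, sd2, td2⟩ := aux_testD hφ hφs (0, 1)
    have hd1φ : Differentiable ℝ (fun x => fderiv ℝ φ x ((1 : ℝ), (0 : ℝ))) :=
      cd1.differentiable hone
    have hd2φ : Differentiable ℝ (fun x => fderiv ℝ φ x ((0 : ℝ), (1 : ℝ))) :=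
      cd2.differentiable hone
    have hφd : Differentiable ℝ φ := hφ.differentiable hone
    set K := tsupport φ with hK
    have hKc : IsCompact K := hφs
    have hKΩ : K ⊆ Ω := hφΩ
    -- the common second-derivative term
    set X := fun x => fderiv ℝ (fun y => fderiv ℝ φ y ((0 : ℝ), (1 : ℝ))) x ((1 : ℝ), (0 : ℝ))
      with hX
    have hXc : Continuous X := ((aux_contDiff_fderiv cd2).clm_apply contDiff_const).continuous
    have hXsupp : Function.support X ⊆ K :=
      (aux_support_fderiv_apply _).trans td2
    -- integrability of all the pieces
    have ia : IntegrableOn (fun x => u x * (v x * X x)) Ω volume := by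
      refine aux_integrableOn_mul huΩ (hvc.mul hXc) hKc hKΩ ?_
      exact (Function.support_mul_subset_right _ _).trans hXsupp
    have ib : IntegrableOn
        (fun x => u x * (fderiv ℝ v x (1, 0) * fderiv ℝ φ x (0, 1))) Ω volume := by
      refine aux_integrableOn_mul huΩ (hD1v.mul cd2.continuous) hKc hKΩ ?_
      exact (Function.support_mul_subset_right _ _).trans (aux_support_fderiv_apply _)
    have ic : IntegrableOn
        (fun x => u x * (fderiv ℝ v x (0, 1) * fderiv ℝ φ x (1, 0))) Ω volume := by
      refine aux_integrableOn_mul huΩ (hD2v.mul cd1.continuous) hKc hKΩ ?_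
      exact (Function.support_mul_subset_right _ _).trans (aux_support_fderiv_apply _)
    have ip : IntegrableOn (fun x => g₁ x * (v x * fderiv ℝ φ x (0, 1))) Ω volume := by
      refine aux_integrableOn_mul hg1Ω (hvc.mul cd2.continuous) hKc hKΩ ?_
      exact (Function.support_mul_subset_right _ _).trans (aux_support_fderiv_apply _)
    have iq : IntegrableOn (fun x => g₂ x * (v x * fderiv ℝ φ x (1, 0))) Ω volume := by
      refine aux_integrableOn_mul hg2Ω (hvc.mul cd1.continuous) hKc hKΩ ?_
      exact (Function.support_mul_subset_right _ _).trans (aux_support_fderiv_apply _)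
    have ir : IntegrableOn (fun x => g₁ x * (φ x * fderiv ℝ v x (0, 1))) Ω volume := by
      refine aux_integrableOn_mul hg1Ω (hφ.continuous.mul hD2v) hKc hKΩ ?_
      exact (Function.support_mul_subset_left _ _).trans (subset_tsupport φ)
    have is' : IntegrableOn (fun x => g₂ x * (φ x * fderiv ℝ v x (1, 0))) Ω volume := by
      refine aux_integrableOn_mul hg2Ω (hφ.continuous.mul hD1v) hKc hKΩ ?_
      exact (Function.support_mul_subset_left _ _).trans (subset_tsupport φ)
    -- Equation A: from the weak curl identity for `w`
    have hA := aux_weak_curl hΩ (u := w) hw hφ hφs hφΩ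
    have hA' : (∫ x in Ω, u x * (fderiv ℝ v x (1, 0) * fderiv ℝ φ x (0, 1)))
        - ∫ x in Ω, g₁ x * (v x * fderiv ℝ φ x (0, 1))
        = (∫ x in Ω, u x * (fderiv ℝ v x (0, 1) * fderiv ℝ φ x (1, 0)))
        - ∫ x in Ω, g₂ x * (v x * fderiv ℝ φ x (1, 0)) := by
      rw [← integral_sub ib ip, ← integral_sub ic iq]
      calc ∫ x in Ω, (u x * (fderiv ℝ v x (1, 0) * fderiv ℝ φ x (0, 1))
              - g₁ x * (v x * fderiv ℝ φ x (0, 1)))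
          = ∫ x in Ω, (u x * fderiv ℝ v x (1, 0) - v x * g₁ x) * fderiv ℝ φ x (0, 1) :=
            setIntegral_congr_fun hmeas (fun x _ => by ring)
        _ = ∫ x in Ω, (u x * fderiv ℝ v x (0, 1) - v x * g₂ x) * fderiv ℝ φ x (1, 0) := hA
        _ = _ := setIntegral_congr_fun hmeas (fun x _ => by ring)
    -- Equation B: from the weak curl identity for `u` tested against `v * φ`
    have hvφc : ContDiff ℝ (⊤ : ℕ∞) (fun x => v x * φ x) := hv.mul hφ
    have hvφs : HasCompactSupport (fun x => v x * φ x) := hφs.mul_left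
    have hvφΩ : tsupport (fun x => v x * φ x) ⊆ Ω :=
      (tsupport_mul_subset_right (f := v) (g := φ)).trans hφΩ
    have hB := aux_weak_curl hΩ ⟨huΩ, hg1Ω, hg2Ω, hu1, hu2⟩ hvφc hvφs hvφΩ
    have hprod : ∀ (e : ℝ × ℝ) (x : ℝ × ℝ), fderiv ℝ (fun y => v y * φ y) x e
        = v x * fderiv ℝ φ x e + φ x * fderiv ℝ v x e := fun e x =>
      aux_fderiv_mul_apply hvd hφd x e
    have hB' : (∫ x in Ω, g₁ x * (v x * fderiv ℝ φ x (0, 1)))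
        + ∫ x in Ω, g₁ x * (φ x * fderiv ℝ v x (0, 1))
        = (∫ x in Ω, g₂ x * (v x * fderiv ℝ φ x (1, 0)))
        + ∫ x in Ω, g₂ x * (φ x * fderiv ℝ v x (1, 0)) := by
      rw [← integral_add ip ir, ← integral_add iq is']
      calc ∫ x in Ω, (g₁ x * (v x * fderiv ℝ φ x (0, 1))
              + g₁ x * (φ x * fderiv ℝ v x (0, 1)))
          = ∫ x in Ω, g₁ x * fderiv ℝ (fun y => v y * φ y) x (0, 1) :=
            setIntegral_congr_fun hmeas (fun x _ => by rw [hprod (0, 1) x]; ring)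
        _ = ∫ x in Ω, g₂ x * fderiv ℝ (fun y => v y * φ y) x (1, 0) := hB
        _ = _ := setIntegral_congr_fun hmeas (fun x _ => by rw [hprod (1, 0) x]; ring)
    -- Equations C1, C2: testing the weak gradient of `u` against `v ∂₂φ` and `v ∂₁φ`
    have hvd2c : ContDiff ℝ (⊤ : ℕ∞) (fun x => v x * fderiv ℝ φ x (0, 1)) := hv.mul cd2
    have hvd2s : HasCompactSupport (fun x => v x * fderiv ℝ φ x (0, 1)) := sd2.mul_left
    have hvd2Ω : tsupport (fun x => v x * fderiv ℝ φ x (0, 1)) ⊆ Ω :=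
      ((tsupport_mul_subset_right (f := v)).trans td2).trans hφΩ
    have hvd1c : ContDiff ℝ (⊤ : ℕ∞) (fun x => v x * fderiv ℝ φ x (1, 0)) := hv.mul cd1
    have hvd1s : HasCompactSupport (fun x => v x * fderiv ℝ φ x (1, 0)) := sd1.mul_left
    have hvd1Ω : tsupport (fun x => v x * fderiv ℝ φ x (1, 0)) ⊆ Ω :=
      ((tsupport_mul_subset_right (f := v)).trans td1).trans hφΩ
    have hC1 := hu1 _ hvd2c hvd2s hvd2Ω
    have hC2 := hu2 _ hvd1c hvd1s hvd1Ω
    have hprod2 : ∀ x : ℝ × ℝ, fderiv ℝ (fun y => v y * fderiv ℝ φ y (0, 1)) x (1, 0)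
        = v x * X x + fderiv ℝ φ x (0, 1) * fderiv ℝ v x (1, 0) := fun x => by
      rw [aux_fderiv_mul_apply hvd hd2φ x (1, 0)]
    have hprod1 : ∀ x : ℝ × ℝ, fderiv ℝ (fun y => v y * fderiv ℝ φ y (1, 0)) x (0, 1)
        = v x * X x + fderiv ℝ φ x (1, 0) * fderiv ℝ v x (0, 1) := fun x => by
      rw [aux_fderiv_mul_apply hvd hd1φ x (0, 1), hX]
      rw [aux_schwarz hφ x ((1 : ℝ), (0 : ℝ)) ((0 : ℝ), (1 : ℝ))]
    have hC1' : (∫ x in Ω, u x * (v x * X x))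
        + ∫ x in Ω, u x * (fderiv ℝ v x (1, 0) * fderiv ℝ φ x (0, 1))
        = -∫ x in Ω, g₁ x * (v x * fderiv ℝ φ x (0, 1)) := by
      rw [← integral_add ia ib, ← hC1]
      exact setIntegral_congr_fun hmeas (fun x _ => by rw [hprod2 x]; ring)
    have hC2' : (∫ x in Ω, u x * (v x * X x))
        + ∫ x in Ω, u x * (fderiv ℝ v x (0, 1) * fderiv ℝ φ x (1, 0))
        = -∫ x in Ω, g₂ x * (v x * fderiv ℝ φ x (1, 0)) := by
      rw [← integral_add ia ic, ← hC2]
      exact setIntegral_congr_fun hmeas (fun x _ => by rw [hprod1 x]; ring)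
    -- combine everything
    have goal_eq : ∫ x in Ω, (g₁ x * fderiv ℝ v x (0, 1) - g₂ x * fderiv ℝ v x (1, 0)) * φ x
        = (∫ x in Ω, g₁ x * (φ x * fderiv ℝ v x (0, 1)))
          - ∫ x in Ω, g₂ x * (φ x * fderiv ℝ v x (1, 0)) := by
      rw [← integral_sub ir is']
      exact setIntegral_congr_fun hmeas (fun x _ => by ring)
    rw [goal_eq]
    linarith [hA', hB', hC1', hC2']
  -- conclude by the fundamental lemma of the calculus of variations
  rw [ae_restrict_iff' hΩ.measurableSet]
  have hloc : LocallyIntegrableOn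
      (fun x => g₁ x * fderiv ℝ v x (0, 1) - g₂ x * fderiv ℝ v x (1, 0)) Ω volume := by
    apply LocallyIntegrableOn.sub
    · exact hg1Ω.mul_continuousOn hD2v.continuousOn hΩ.isLocallyClosed
    · exact hg2Ω.mul_continuousOn hD1v.continuousOn hΩ.isLocallyClosed
  refine hΩ.ae_eq_zero_of_integral_contDiff_smul_eq_zero hloc ?_
  intro ψ hψ hψs hψΩ
  rw [← setIntegral_eq_integral_of_forall_compl_eq_zero (s := Ω) (fun x hx => ?_)]
  · calc ∫ x in Ω, ψ x • (g₁ x * fderiv ℝ v x (0, 1) - g₂ x * fderiv ℝ v x (1, 0))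
        = ∫ x in Ω, (g₁ x * fderiv ℝ v x (0, 1) - g₂ x * fderiv ℝ v x (1, 0)) * ψ x :=
          setIntegral_congr_fun hΩ.measurableSet
            (fun x _ => by rw [smul_eq_mul, mul_comm])
      _ = 0 := key ψ hψ hψs hψΩ
  · have hz : ψ x = 0 := image_eq_zero_of_notMem_tsupport (fun h => hx (hψΩ h))
    rw [hz, zero_smul]
end

section
/- Let Ω ⊆ ℝ² be a nonempty open set and let u : ℝ² → ℝ be locally integrable on Ω with weak gradient g = (g₁,g₂) on Ω. Then for every nonempty open subset U ⊆ Ω, the set {x = (x₁,x₂) ∈ U : g(x) ≠ (−x₂, x₁)} has positive two-dimensional Lebesgue measure. Consequently, the set where the Heisenberg contact system fails for the graph map f(x₁,x₂) = (x₁, x₂, u(x₁,x₂)) meets every nonempty open subset of Ω in positive measure, so its closure is all of Ω. -/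
open MeasureTheory
open scoped ENNReal

open Set

/-- 1-D integration by parts for `t ↦ t`: `∫ t * b'(t) = -∫ b`. -/
lemma integral_id_mul_deriv (b : ℝ → ℝ) (hb : ContDiff ℝ (⊤ : ℕ∞) b)
    (hsb : HasCompactSupport b) : ∫ t, t * deriv b t = - ∫ t, b t := by
  have hder : Differentiable ℝ b := hb.differentiable (by simp)
  have hb' : Continuous (deriv b) :=
    ((contDiff_infty_iff_deriv.mp hb).2).continuous
  set F : ℝ → ℝ := fun t => t * b t with hFdef
  have hFc : ContDiff ℝ 1 F := (contDiff_id.mul (hb.of_le (by exact_mod_cast le_top)))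
  have hFs : HasCompactSupport F := by
    have : F = (fun t => (t : ℝ)) * b := rfl
    rw [this]; exact hsb.mul_left
  have hderivF : ∀ t, deriv F t = b t + t * deriv b t := by
    intro t
    have h := ((hasDerivAt_id' t).mul (hder t).hasDerivAt).deriv
    rw [show F = (fun x : ℝ => x) * b from rfl]
    simpa using h
  -- integral of deriv F over ℝ is 0
  have hcont : Continuous (deriv F) := by
    have : deriv F = fun t => b t + t * deriv b t := funext hderivF
    rw [this]; exact hb.continuous.add (continuous_id.mul hb')
  have hint : Integrable (deriv F) := hcont.integrable_of_hasCompactSupport hFs.deriv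
  have h0 : ∫ t, deriv F t = 0 := by
    have h1 : ∫ t in Iic (0:ℝ), deriv F t = F 0 :=
      HasCompactSupport.integral_Iic_deriv_eq hFc hFs 0
    have h2 : ∫ t in Ioi (0:ℝ), deriv F t = - F 0 :=
      HasCompactSupport.integral_Ioi_deriv_eq hFc hFs 0
    have := intervalIntegral.integral_Iic_add_Ioi (b := (0:ℝ)) hint.integrableOn
      hint.integrableOn
    rw [h1, h2] at this
    linarith [this.symm]
  have hib : Integrable b := hb.continuous.integrable_of_hasCompactSupport hsb
  have hib' : Integrable (fun t => t * deriv b t) := by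
    refine (continuous_id.mul hb').integrable_of_hasCompactSupport ?_
    exact hsb.deriv.mul_left
  have : ∫ t, (b t + t * deriv b t) = 0 := by
    rw [← h0]; exact (integral_congr_ae (Filter.Eventually.of_forall
      fun t => (hderivF t).symm))
  rw [integral_add hib hib'] at this
  linarith

/-- Directional derivatives of a product of one-variable functions on `ℝ × ℝ`. -/
lemma fderiv_prod_mul (a b : ℝ → ℝ) (ha : Differentiable ℝ a) (hb : Differentiable ℝ b)
    (x v : ℝ × ℝ) :
    fderiv ℝ (fun y : ℝ × ℝ => a y.1 * b y.2) x v
      = deriv a x.1 * b x.2 * v.1 + a x.1 * (deriv b x.2 * v.2) := by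
  have h1 : HasFDerivAt (fun y : ℝ × ℝ => a y.1)
      ((ContinuousLinearMap.smulRight (1 : ℝ →L[ℝ] ℝ) (deriv a x.1)).comp
        (ContinuousLinearMap.fst ℝ ℝ ℝ)) x :=
    ((ha x.1).hasDerivAt.hasFDerivAt).comp x hasFDerivAt_fst
  have h2 : HasFDerivAt (fun y : ℝ × ℝ => b y.2)
      ((ContinuousLinearMap.smulRight (1 : ℝ →L[ℝ] ℝ) (deriv b x.2)).comp
        (ContinuousLinearMap.snd ℝ ℝ ℝ)) x :=
    ((hb x.2).hasDerivAt.hasFDerivAt).comp x hasFDerivAt_snd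
  have h := (h1.mul h2).fderiv
  rw [show (fun y : ℝ × ℝ => a y.1 * b y.2) = (fun y => a y.1) * (fun y => b y.2) from rfl, h]
  simp [ContinuousLinearMap.smulRight_apply, smul_eq_mul]
  ring

/-- For `u ∈ W^{1,1}_loc(Ω)` with weak gradient `g`, the set where the Heisenberg contact
system for the graph map `f(x₁,x₂) = (x₁,x₂,u(x₁,x₂))` fails (i.e. `g(x) ≠ (−x₂, x₁)`)
meets every nonempty open subset of `Ω` in positive Lebesgue measure; consequently its
closure contains all of `Ω`. -/
theorem contact_failure_set_dense
    (Ω : Set (ℝ × ℝ)) (hΩ : IsOpen Ω) (hne : Ω.Nonempty)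
    (u g₁ g₂ : ℝ × ℝ → ℝ) (hu : HasWeakGradientOn u g₁ g₂ Ω) :
    (∀ U : Set (ℝ × ℝ), IsOpen U → U.Nonempty → U ⊆ Ω →
      0 < volume {x ∈ U | (g₁ x, g₂ x) ≠ (-x.2, x.1)}) ∧
    Ω ⊆ closure {x ∈ Ω | (g₁ x, g₂ x) ≠ (-x.2, x.1)} := by
  obtain ⟨huloc, hg1loc, hg2loc, hid1, hid2⟩ := hu
  have key : ∀ U : Set (ℝ × ℝ), IsOpen U → U.Nonempty → U ⊆ Ω →
      0 < volume {x ∈ U | (g₁ x, g₂ x) ≠ (-x.2, x.1)} := by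
    intro U hUopen hUne hUΩ
    rw [pos_iff_ne_zero]
    intro hS0
    set S := {x ∈ U | (g₁ x, g₂ x) ≠ (-x.2, x.1)} with hSdef
    -- pick a closed ball inside U
    obtain ⟨x₀, hx₀⟩ := hUne
    obtain ⟨ε, hε, hball⟩ := Metric.isOpen_iff.mp hUopen x₀ hx₀
    have hclosed : Metric.closedBall x₀ (ε / 2) ⊆ U :=
      (Metric.closedBall_subset_ball (by linarith)).trans hball
    -- bump functions
    set a : ContDiffBump x₀.1 := ⟨ε / 4, ε / 2, by linarith, by linarith⟩
    set b : ContDiffBump x₀.2 := ⟨ε / 4, ε / 2, by linarith, by linarith⟩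
    have hKsub : tsupport (a : ℝ → ℝ) ×ˢ tsupport (b : ℝ → ℝ) ⊆ U := by
      rw [a.tsupport_eq, b.tsupport_eq]
      rw [closedBall_prod_same]
      exact hclosed
    have hKcomp : IsCompact (tsupport (a : ℝ → ℝ) ×ˢ tsupport (b : ℝ → ℝ)) :=
      a.hasCompactSupport.prod b.hasCompactSupport
    have hacd : ContDiff ℝ (⊤ : ℕ∞) (a : ℝ → ℝ) := a.contDiff
    have hbcd : ContDiff ℝ (⊤ : ℕ∞) (b : ℝ → ℝ) := b.contDiff
    have hacd' : ContDiff ℝ (⊤ : ℕ∞) (deriv (a : ℝ → ℝ)) :=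
      (contDiff_infty_iff_deriv.mp hacd).2
    have hbcd' : ContDiff ℝ (⊤ : ℕ∞) (deriv (b : ℝ → ℝ)) :=
      (contDiff_infty_iff_deriv.mp hbcd).2
    -- test functions
    set φ₁ : ℝ × ℝ → ℝ := fun y => a y.1 * deriv (b : ℝ → ℝ) y.2 with hφ₁def
    set φ₂ : ℝ × ℝ → ℝ := fun y => deriv (a : ℝ → ℝ) y.1 * b y.2 with hφ₂def
    have hsupp : ∀ (p q : ℝ → ℝ), Function.support p ⊆ tsupport (a : ℝ → ℝ) →
        Function.support q ⊆ tsupport (b : ℝ → ℝ) →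
        tsupport (fun y : ℝ × ℝ => p y.1 * q y.2) ⊆
          tsupport (a : ℝ → ℝ) ×ˢ tsupport (b : ℝ → ℝ) := by
      intro p q hp hq
      apply closure_minimal _ (hKcomp.isClosed)
      intro y hy
      simp only [Function.mem_support] at hy
      have h1 : p y.1 ≠ 0 := fun h => hy (by simp [h])
      have h2 : q y.2 ≠ 0 := fun h => hy (by simp [h])
      exact ⟨hp h1, hq h2⟩
    have hsupp1 : tsupport φ₁ ⊆ tsupport (a : ℝ → ℝ) ×ˢ tsupport (b : ℝ → ℝ) :=
      hsupp _ _ (subset_tsupport _) support_deriv_subset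
    have hsupp2 : tsupport φ₂ ⊆ tsupport (a : ℝ → ℝ) ×ˢ tsupport (b : ℝ → ℝ) :=
      hsupp _ _ support_deriv_subset (subset_tsupport _)
    have hφ₁cd : ContDiff ℝ (⊤ : ℕ∞) φ₁ :=
      (hacd.comp contDiff_fst).mul (hbcd'.comp contDiff_snd)
    have hφ₂cd : ContDiff ℝ (⊤ : ℕ∞) φ₂ :=
      (hacd'.comp contDiff_fst).mul (hbcd.comp contDiff_snd)
    have hφ₁cs : HasCompactSupport φ₁ := HasCompactSupport.of_support_subset_isCompact
      hKcomp ((subset_tsupport _).trans hsupp1)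
    have hφ₂cs : HasCompactSupport φ₂ := HasCompactSupport.of_support_subset_isCompact
      hKcomp ((subset_tsupport _).trans hsupp2)
    have hφ₁U : tsupport φ₁ ⊆ U := hsupp1.trans hKsub
    have hφ₂U : tsupport φ₂ ⊆ U := hsupp2.trans hKsub
    -- apply weak gradient identities
    have E1 := hid1 φ₁ hφ₁cd hφ₁cs (hφ₁U.trans hUΩ)
    have E2 := hid2 φ₂ hφ₂cd hφ₂cs (hφ₂U.trans hUΩ)
    -- the two u-integrands coincide
    have hLHS : (∫ x in Ω, u x * fderiv ℝ φ₁ x (1, 0))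
        = ∫ x in Ω, u x * fderiv ℝ φ₂ x (0, 1) := by
      apply integral_congr_ae
      apply Filter.Eventually.of_forall
      intro x
      have h1 := fderiv_prod_mul (a : ℝ → ℝ) (deriv (b : ℝ → ℝ))
        (hacd.differentiable (by simp)) (hbcd'.differentiable (by simp)) x (1, 0)
      have h2 := fderiv_prod_mul (deriv (a : ℝ → ℝ)) (b : ℝ → ℝ)
        (hacd'.differentiable (by simp)) (hbcd.differentiable (by simp)) x (0, 1)
      simp only [hφ₁def, hφ₂def]
      rw [h1, h2]
      ring_nf
    -- hence the two g-integrals coincide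
    have Eg : (∫ x in Ω, g₁ x * φ₁ x) = ∫ x in Ω, g₂ x * φ₂ x := by
      have := E1.symm.trans (hLHS.trans E2)
      exact neg_injective this
    -- replace g a.e. using measure-zero failure set
    have hae : ∀ᵐ x ∂(volume : Measure (ℝ × ℝ)), x ∉ S := by
      rw [ae_iff]; simpa using hS0
    have hg1ae : (∫ x in Ω, g₁ x * φ₁ x) = ∫ x in Ω, (-x.2) * φ₁ x := by
      apply integral_congr_ae
      apply ae_restrict_of_ae
      filter_upwards [hae] with x hx
      by_cases hφ : φ₁ x = 0
      · simp [hφ]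
      · have hxU : x ∈ U := hφ₁U (subset_tsupport _ (Function.mem_support.mpr hφ))
        have : (g₁ x, g₂ x) = (-x.2, x.1) := by
          by_contra hc; exact hx ⟨hxU, hc⟩
        rw [show g₁ x = -x.2 from congrArg Prod.fst this]
    have hg2ae : (∫ x in Ω, g₂ x * φ₂ x) = ∫ x in Ω, x.1 * φ₂ x := by
      apply integral_congr_ae
      apply ae_restrict_of_ae
      filter_upwards [hae] with x hx
      by_cases hφ : φ₂ x = 0
      · simp [hφ]
      · have hxU : x ∈ U := hφ₂U (subset_tsupport _ (Function.mem_support.mpr hφ))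
        have : (g₁ x, g₂ x) = (-x.2, x.1) := by
          by_contra hc; exact hx ⟨hxU, hc⟩
        rw [show g₂ x = x.1 from congrArg Prod.snd this]
    -- extend integrals to all of ℝ²
    have hext1 : (∫ x in Ω, (-x.2) * φ₁ x) = ∫ x : ℝ × ℝ, (-x.2) * φ₁ x := by
      apply setIntegral_eq_integral_of_forall_compl_eq_zero
      intro x hx
      have : φ₁ x = 0 := by
        by_contra h
        exact hx (hUΩ (hφ₁U (subset_tsupport _ (Function.mem_support.mpr h))))
      simp [this]
    have hext2 : (∫ x in Ω, x.1 * φ₂ x) = ∫ x : ℝ × ℝ, x.1 * φ₂ x := by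
      apply setIntegral_eq_integral_of_forall_compl_eq_zero
      intro x hx
      have : φ₂ x = 0 := by
        by_contra h
        exact hx (hUΩ (hφ₂U (subset_tsupport _ (Function.mem_support.mpr h))))
      simp [this]
    -- compute the full-space integrals via Fubini
    set A : ℝ := ∫ t, (a : ℝ → ℝ) t with hA
    set B : ℝ := ∫ t, (b : ℝ → ℝ) t with hB
    have hIa : (∫ t, t * deriv (a : ℝ → ℝ) t) = -A :=
      integral_id_mul_deriv _ hacd a.hasCompactSupport
    have hIb : (∫ t, t * deriv (b : ℝ → ℝ) t) = -B :=
      integral_id_mul_deriv _ hbcd b.hasCompactSupport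
    have hcomp1 : (∫ x : ℝ × ℝ, (-x.2) * φ₁ x) = A * B := by
      have hstep : (∫ x : ℝ × ℝ, (-x.2) * φ₁ x)
          = (∫ t, (a : ℝ → ℝ) t) * ∫ t, -(t * deriv (b : ℝ → ℝ) t) := by
        rw [MeasureTheory.Measure.volume_eq_prod, ← MeasureTheory.integral_prod_mul]
        exact integral_congr_ae (Filter.Eventually.of_forall fun x => by
          simp only [hφ₁def]; ring)
      rw [hstep, show (∫ t, -(t * deriv (b : ℝ → ℝ) t)) = -∫ t, t * deriv (b : ℝ → ℝ) t from
        integral_neg _, hIb]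
      ring_nf
      exact mul_comm _ _
    have hcomp2 : (∫ x : ℝ × ℝ, x.1 * φ₂ x) = -(A * B) := by
      have hstep : (∫ x : ℝ × ℝ, x.1 * φ₂ x)
          = (∫ t, t * deriv (a : ℝ → ℝ) t) * ∫ t, (b : ℝ → ℝ) t := by
        rw [MeasureTheory.Measure.volume_eq_prod, ← MeasureTheory.integral_prod_mul]
        exact integral_congr_ae (Filter.Eventually.of_forall fun x => by
          simp only [hφ₂def]; ring)
      rw [hstep, hIa]; ring
    have hfinal : A * B = -(A * B) := by
      rw [← hcomp2, ← hcomp1, ← hext1, ← hext2, ← hg1ae, ← hg2ae]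
      exact Eg
    have hApos : 0 < A := a.integral_pos
    have hBpos : 0 < B := b.integral_pos
    nlinarith
  constructor
  · exact key
  · intro x hx
    rw [mem_closure_iff]
    intro o ho hxo
    have hU : IsOpen (o ∩ Ω) := ho.inter hΩ
    have hUne : (o ∩ Ω).Nonempty := ⟨x, hxo, hx⟩
    have hpos := key (o ∩ Ω) hU hUne inter_subset_right
    obtain ⟨y, hy⟩ := nonempty_of_measure_ne_zero hpos.ne'
    exact ⟨y, hy.1.1, hy.1.2, hy.2⟩
end
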